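/- Range characterization on characters: a function F : ℤ^n \ {0} → C(𝕋^n) is the X-ray transform of some continuous f (i.e., F(v)(x) = ∫₀¹ f(x+tv)dt for all v, x) only if for all k ∈ ℤ^n and all nonzero v, w ∈ ℤ^n with v·k = 0 and w·k = 0, the k-th Fourier coefficients of F(v) and F(w) agree, and for v with v·k ≠ 0 the k-th Fourier coefficient of F(v) vanishes. -/

import Mathlib

open MeasureTheory Real Submodule Pointwise

section aux
variable (n : ℕ)

lemma icc_ae_fd :
    (Set.Icc (0 : Fin n → ℝ) 1 : Set (Fin n → ℝ)) =ᵐ[volume]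
      ZSpan.fundamentalDomain (Pi.basisFun ℝ (Fin n)) := by
  have hD : ZSpan.fundamentalDomain (Pi.basisFun ℝ (Fin n)) =
      Set.pi Set.univ (fun _ => Set.Ico (0:ℝ) 1) := by
    ext x; simp [ZSpan.fundamentalDomain, Set.mem_pi]
  rw [hD, ← Set.pi_univ_Icc, volume_pi]
  exact (Measure.ae_eq_set_pi fun i _ => Ico_ae_eq_Icc).symm

lemma shift_inv (g : (Fin n → ℝ) → ℂ)
    (hper : ∀ (x : Fin n → ℝ) (m : Fin n → ℤ), g (x + fun i => (m i : ℝ)) = g x)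
    (c : Fin n → ℝ) :
    (∫ x in Set.Icc (0 : Fin n → ℝ) 1, g (x + c)) =
      ∫ x in Set.Icc (0 : Fin n → ℝ) 1, g x := by
  set b := Pi.basisFun ℝ (Fin n)
  set L := span ℤ (Set.range b)
  have hfd : IsAddFundamentalDomain L (ZSpan.fundamentalDomain b) volume :=
    ZSpan.isAddFundamentalDomain b volume
  haveI : VAddCommClass (Fin n → ℝ) L (Fin n → ℝ) :=
    ⟨fun a l x => by change a + (↑l + x) = ↑l + (a + x); exact add_left_comm a (↑l) x⟩
  have hfd' : IsAddFundamentalDomain L (c +ᵥ ZSpan.fundamentalDomain b) volume :=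
    hfd.vadd_of_comm c
  haveI : MeasurableVAdd L (Fin n → ℝ) :=
    { measurable_const_vadd := fun l => (measurable_const_add (↑l : Fin n → ℝ)),
      measurable_vadd_const := fun x => (measurable_subtype_coe.add_const x) }
  haveI : VAddInvariantMeasure L (Fin n → ℝ) volume :=
    ⟨fun l s _ => measure_preimage_add volume (↑l : Fin n → ℝ) s⟩
  have hinv : ∀ (l : L) (x : Fin n → ℝ), g (l +ᵥ x) = g x := by
    rintro ⟨l, hl⟩ x
    have h' : ∀ i, ∃ m : ℤ, (m : ℝ) = l i := by
      intro i
      exact (b.mem_span_iff_repr_mem ℤ l).mp hl i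
    choose m hm using h'
    have hle : l = fun i => (m i : ℝ) := funext fun i => (hm i).symm
    change g (l + x) = g x
    rw [add_comm, hle]
    exact hper x m
  have h1 : (∫ x in Set.Icc (0 : Fin n → ℝ) 1, g (x + c)) =
      ∫ x in ZSpan.fundamentalDomain b, g (x + c) :=
    setIntegral_congr_set (icc_ae_fd n)
  have h2 : (∫ x in ZSpan.fundamentalDomain b, g (x + c)) =
      ∫ x in c +ᵥ ZSpan.fundamentalDomain b, g x := by
    have := (measurePreserving_add_left (volume : Measure (Fin n → ℝ)) c).setIntegral_image_emb
      (measurableEmbedding_addLeft c) g (ZSpan.fundamentalDomain b)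
    simp_rw [add_comm _ c]
    have him : (fun x => c + x) '' ZSpan.fundamentalDomain b
        = c +ᵥ ZSpan.fundamentalDomain b := rfl
    rw [him] at this
    exact this.symm
  have h3 : (∫ x in c +ᵥ ZSpan.fundamentalDomain b, g x) =
      ∫ x in ZSpan.fundamentalDomain b, g x :=
    hfd'.setIntegral_eq hfd hinv
  rw [h1, h2, h3, setIntegral_congr_set (icc_ae_fd n)]

variable (k : Fin n → ℤ)

noncomputable def E : (Fin n → ℝ) → ℂ :=
  fun x => Complex.exp (-(2 * π * Complex.I) * ∑ j, (k j : ℂ) * (x j : ℂ))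

lemma E_cont : Continuous (E n k) := by
  unfold E; fun_prop

lemma E_shift (x c : Fin n → ℝ) :
    E n k (x + c) =
      E n k x * Complex.exp (-(2 * π * Complex.I) * ∑ j, (k j : ℂ) * (c j : ℂ)) := by
  unfold E
  rw [← Complex.exp_add, ← mul_add, ← Finset.sum_add_distrib]
  congr 2
  refine Finset.sum_congr rfl fun j _ => ?_
  simp only [Pi.add_apply]
  push_cast
  ring

lemma E_per (x : Fin n → ℝ) (m : Fin n → ℤ) : E n k (x + fun i => (m i : ℝ)) = E n k x := by
  rw [E_shift]
  have : (∑ j, (k j : ℂ) * ((m j : ℝ) : ℂ)) = ((∑ j, k j * m j : ℤ) : ℂ) := by push_cast; ring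
  rw [this]
  have h1 : Complex.exp (-(2 * π * Complex.I) * ((∑ j, k j * m j : ℤ) : ℂ)) = 1 := by
    rw [show (-(2 * π * Complex.I) * ((∑ j, k j * m j : ℤ) : ℂ))
        = ((-(∑ j, k j * m j) : ℤ) : ℂ) * (2 * π * Complex.I) by push_cast; ring]
    exact Complex.exp_int_mul_two_pi_mul_I _
  rw [h1, mul_one]

/-- Key computation. -/
lemma key (f : (Fin n → ℝ) → ℂ) (hf : Continuous f)
    (hper : ∀ (x : Fin n → ℝ) (m : Fin n → ℤ), f (x + fun i => (m i : ℝ)) = f x)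
    (v : Fin n → ℤ) :
    (∫ x in Set.Icc (0 : Fin n → ℝ) 1,
        (∫ t in (0:ℝ)..1, f (x + t • fun i => (v i : ℝ))) * E n k x) =
      (∫ t in (0:ℝ)..1, Complex.exp (2 * π * Complex.I * ((∑ i, v i * k i : ℤ) : ℂ) * t)) *
        ∫ x in Set.Icc (0 : Fin n → ℝ) 1, f x * E n k x := by
  set V : Fin n → ℝ := fun i => (v i : ℝ) with hV
  set S : ℤ := ∑ i, v i * k i with hS
  set g : (Fin n → ℝ) → ℂ := fun x => f x * E n k x with hg
  have hgper : ∀ (x : Fin n → ℝ) (m : Fin n → ℤ), g (x + fun i => (m i : ℝ)) = g x := by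
    intro x m; simp only [hg, hper, E_per]
  set C : ℂ := ∫ x in Set.Icc (0 : Fin n → ℝ) 1, g x with hC
  -- step 1: rewrite interval integral as set integral and move E inside
  have step1 : ∀ x : Fin n → ℝ,
      (∫ t in (0:ℝ)..1, f (x + t • V)) * E n k x
        = ∫ t in Set.Ioc (0:ℝ) 1, f (x + t • V) * E n k x := by
    intro x
    rw [intervalIntegral.integral_of_le zero_le_one, ← integral_mul_const]
  simp only [step1]
  -- Fubini
  have hcont : Continuous (fun p : (Fin n → ℝ) × ℝ => f (p.1 + p.2 • V) * E n k p.1) := by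
    apply Continuous.mul
    · exact hf.comp (continuous_fst.add (continuous_snd.smul continuous_const))
    · exact (E_cont n k).comp continuous_fst
  have hint : Integrable (Function.uncurry fun x t => f (x + t • V) * E n k x)
      ((volume.restrict (Set.Icc (0 : Fin n → ℝ) 1)).prod (volume.restrict (Set.Ioc (0:ℝ) 1))) := by
    rw [Measure.prod_restrict]
    have hcpt : IsCompact ((Set.Icc (0 : Fin n → ℝ) 1) ×ˢ Set.Icc (0:ℝ) 1) :=
      isCompact_Icc.prod isCompact_Icc
    rw [← Measure.volume_eq_prod]
    have : IntegrableOn (Function.uncurry fun x t => f (x + t • V) * E n k x)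
        ((Set.Icc (0 : Fin n → ℝ) 1) ×ˢ Set.Icc (0:ℝ) 1) volume :=
      hcont.continuousOn.integrableOn_compact hcpt
    exact this.mono_set (Set.prod_mono_right Set.Ioc_subset_Icc_self)
  rw [integral_integral_swap hint]
  -- inner integral
  have inner : ∀ t : ℝ,
      (∫ x in Set.Icc (0 : Fin n → ℝ) 1, f (x + t • V) * E n k x)
        = Complex.exp (2 * π * Complex.I * (S : ℂ) * t) * C := by
    intro t
    have hE : ∀ x, f (x + t • V) * E n k x
        = g (x + t • V) * Complex.exp (2 * π * Complex.I * (S : ℂ) * t) := by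
      intro x
      simp only [hg]
      rw [E_shift]
      have : (∑ j, (k j : ℂ) * (((t • V) j : ℝ) : ℂ)) = (t : ℂ) * (S : ℂ) := by
        simp only [Pi.smul_apply, smul_eq_mul, hV, hS]
        push_cast
        rw [Finset.mul_sum]
        refine Finset.sum_congr rfl fun j _ => by ring
      rw [this, mul_assoc, mul_assoc, ← Complex.exp_add,
        show (-(2 * π * Complex.I) * ((t:ℂ) * (S:ℂ)) + 2 * π * Complex.I * (S : ℂ) * t)
          = 0 by ring, Complex.exp_zero, mul_one]
    simp only [hE]
    rw [integral_mul_const, shift_inv n g hgper (t • V), ← hC, mul_comm]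
  simp only [inner]
  rw [intervalIntegral.integral_of_le zero_le_one, ← integral_mul_const]

end aux

lemma factor_zero :
    (∫ t in (0:ℝ)..1, Complex.exp (2 * π * Complex.I * (((0:ℤ)) : ℂ) * t)) = 1 := by
  simp

lemma factor_ne (S : ℤ) (hS : S ≠ 0) :
    (∫ t in (0:ℝ)..1, Complex.exp (2 * π * Complex.I * ((S : ℤ) : ℂ) * t)) = 0 := by
  have hc : (2 * π * Complex.I * (S : ℂ)) ≠ 0 := by
    simp only [ne_eq, mul_eq_zero, Complex.I_ne_zero, or_false, Complex.ofReal_ne_zero]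
    push_neg
    refine ⟨?_, by exact_mod_cast hS⟩
    simp [Complex.ext_iff, pi_ne_zero]
  have : ∀ t : ℝ, Complex.exp (2 * π * Complex.I * (S : ℂ) * t)
      = Complex.exp ((2 * π * Complex.I * (S : ℂ)) * t) := fun t => rfl
  rw [integral_exp_mul_complex hc]
  have h1 : Complex.exp (2 * π * Complex.I * (S : ℂ) * (1:ℝ)) = 1 := by
    rw [show (2 * π * Complex.I * (S : ℂ) * (1:ℝ)) = (S : ℂ) * (2 * π * Complex.I) by
      push_cast; ring]
    exact Complex.exp_int_mul_two_pi_mul_I S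
  rw [h1]
  simp

theorem xray_range_characterization (n : ℕ) (f : (Fin n → ℝ) → ℂ)
    (hf : Continuous f)
    (hper : ∀ (x : Fin n → ℝ) (m : Fin n → ℤ), f (x + fun i => (m i : ℝ)) = f x)
    (F : (Fin n → ℤ) → ((Fin n → ℝ) → ℂ))
    (hF : ∀ v : Fin n → ℤ, v ≠ 0 → ∀ x : Fin n → ℝ,
      F v x = ∫ t in (0:ℝ)..1, f (x + t • fun i => (v i : ℝ))) :
    ∀ k : Fin n → ℤ,
      (∀ v w : Fin n → ℤ, v ≠ 0 → w ≠ 0 →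
        (∑ i, v i * k i) = 0 → (∑ i, w i * k i) = 0 →
        (∫ x in Set.Icc (0 : Fin n → ℝ) 1,
            F v x * Complex.exp (-(2 * π * Complex.I) * ∑ j, (k j : ℂ) * (x j : ℂ))) =
          ∫ x in Set.Icc (0 : Fin n → ℝ) 1,
            F w x * Complex.exp (-(2 * π * Complex.I) * ∑ j, (k j : ℂ) * (x j : ℂ))) ∧
      (∀ v : Fin n → ℤ, v ≠ 0 → (∑ i, v i * k i) ≠ 0 →
        (∫ x in Set.Icc (0 : Fin n → ℝ) 1,
            F v x * Complex.exp (-(2 * π * Complex.I) * ∑ j, (k j : ℂ) * (x j : ℂ))) = 0) := by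
  intro k
  have main : ∀ v : Fin n → ℤ, v ≠ 0 →
      (∫ x in Set.Icc (0 : Fin n → ℝ) 1,
          F v x * Complex.exp (-(2 * π * Complex.I) * ∑ j, (k j : ℂ) * (x j : ℂ)))
        = (∫ t in (0:ℝ)..1,
            Complex.exp (2 * π * Complex.I * ((∑ i, v i * k i : ℤ) : ℂ) * t)) *
          ∫ x in Set.Icc (0 : Fin n → ℝ) 1, f x * E n k x := by
    intro v hv
    have h1 : (∫ x in Set.Icc (0 : Fin n → ℝ) 1,
        F v x * Complex.exp (-(2 * π * Complex.I) * ∑ j, (k j : ℂ) * (x j : ℂ)))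
        = ∫ x in Set.Icc (0 : Fin n → ℝ) 1,
            (∫ t in (0:ℝ)..1, f (x + t • fun i => (v i : ℝ))) * E n k x := by
      refine setIntegral_congr_fun measurableSet_Icc fun x _ => ?_
      rw [hF v hv x]
      rfl
    rw [h1, key n k f hf hper v]
  constructor
  · intro v w hv hw hvk hwk
    rw [main v hv, main w hw, hvk, hwk]
  · intro v hv hvk
    rw [main v hv, factor_ne (∑ i, v i * k i) hvk, zero_mul]
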